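/- Suppose conditions (C1')–(C4') hold: (C1') for every t ≥ 0, ω₁ ∈ Ω₁, ω₂ ∈ Ω₂, every sequence λ_n → λ₀ in Λ and every x_n → x in X, one has Φ_{λ_n}(t, ω₁, ω₂, x_n) → Φ_{λ₀}(t, ω₁, x); (C2') there exists R̄_{λ₀} : Ω₁ → ℝ such that the family of closed balls B(ω₁) = { x ∈ X : ‖x‖ ≤ R̄_{λ₀}(ω₁) } belongs to 𝒟_{λ₀}; (C3') for all ω₁, ω₂, limsup_{λ→λ₀} ‖K_λ(ω₁,ω₂)‖ ≤ R̄_{λ₀}(ω₁), where ‖S‖ = sup_{x∈S} ‖x‖; (C4') for all ω₁, ω₂, the union of A_{λ₀}(ω₁) and all A_λ(ω₁,ω₂) for λ ∈ Λ, λ ≠ λ₀, is precompact in X. Then for every ω₁ ∈ Ω₁ and ω₂ ∈ Ω₂, dist(A_λ(ω₁,ω₂), A_{λ₀}(ω₁)) → 0 as λ → λ₀, where dist(E,F) = sup_{a∈E} inf_{b∈F} ‖a−b‖. -/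

import Mathlib

open Set Metric MeasureTheory Filter Topology

section RDS

variable {X : Type*} [MetricSpace X] [MeasurableSpace X] [BorelSpace X]
variable {Ω₁ : Type*} {Ω₂ : Type*} [MeasurableSpace Ω₂]

/-- `(Ω₁, θ₁)` is a parametric dynamical system. -/
def IsParamDS₁ (θ₁ : ℝ → Ω₁ → Ω₁) : Prop :=
  θ₁ 0 = id ∧ ∀ s t : ℝ, θ₁ (s + t) = θ₁ t ∘ θ₁ s

/-- `(Ω₂, F₂, P, θ₂)` is a measure-preserving parametric dynamical system. -/
def IsParamDS₂ (P : Measure Ω₂) (θ₂ : ℝ → Ω₂ → Ω₂) : Prop :=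
  Measurable (fun p : ℝ × Ω₂ => θ₂ p.1 p.2) ∧ θ₂ 0 = id ∧
    (∀ s t : ℝ, θ₂ (s + t) = θ₂ t ∘ θ₂ s) ∧ ∀ t : ℝ, MeasurePreserving (θ₂ t) P P

/-- `Φ` is a continuous cocycle on `X` over the two parametric dynamical systems. -/
def IsCocycle (θ₁ : ℝ → Ω₁ → Ω₁) (θ₂ : ℝ → Ω₂ → Ω₂)
    (Φ : ℝ → Ω₁ → Ω₂ → X → X) : Prop :=
  (∀ ω₁ : Ω₁, Measurable fun p : Ici (0:ℝ) × Ω₂ × X => Φ (p.1 : ℝ) ω₁ p.2.1 p.2.2) ∧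
  (∀ ω₁ ω₂, Φ 0 ω₁ ω₂ = id) ∧
  (∀ t τ : ℝ, 0 ≤ t → 0 ≤ τ → ∀ ω₁ ω₂,
      Φ (t + τ) ω₁ ω₂ = (Φ t (θ₁ τ ω₁) (θ₂ τ ω₂)) ∘ (Φ τ ω₁ ω₂)) ∧
  (∀ t : ℝ, 0 ≤ t → ∀ ω₁ ω₂, Continuous (Φ t ω₁ ω₂))

/-- The pullback image `Φ(t, θ₁(-t)ω₁, θ₂(-t)ω₂, B(θ₁(-t)ω₁, θ₂(-t)ω₂))`. -/
def pbImage (θ₁ : ℝ → Ω₁ → Ω₁) (θ₂ : ℝ → Ω₂ → Ω₂) (Φ : ℝ → Ω₁ → Ω₂ → X → X)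
    (B : Ω₁ → Ω₂ → Set X) (t : ℝ) (ω₁ : Ω₁) (ω₂ : Ω₂) : Set X :=
  Φ t (θ₁ (-t) ω₁) (θ₂ (-t) ω₂) '' B (θ₁ (-t) ω₁) (θ₂ (-t) ω₂)

/-- The collection `𝒟` is neighborhood closed. -/
def NbhdClosed (𝒟 : Set (Ω₁ → Ω₂ → Set X)) : Prop :=
  ∀ D ∈ 𝒟, ∃ ε > (0:ℝ), ∀ B : Ω₁ → Ω₂ → Set X,
    (∀ ω₁ ω₂, (B ω₁ ω₂).Nonempty ∧ B ω₁ ω₂ ⊆ thickening ε (D ω₁ ω₂)) → B ∈ 𝒟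

/-- `K` is a `𝒟`-pullback absorbing set for `Φ`. -/
def AbsorbsFam (θ₁ : ℝ → Ω₁ → Ω₁) (θ₂ : ℝ → Ω₂ → Ω₂) (Φ : ℝ → Ω₁ → Ω₂ → X → X)
    (𝒟 : Set (Ω₁ → Ω₂ → Set X)) (K : Ω₁ → Ω₂ → Set X) : Prop :=
  ∀ ω₁ ω₂, ∀ B ∈ 𝒟, ∃ T > (0:ℝ), ∀ t ≥ T, pbImage θ₁ θ₂ Φ B t ω₁ ω₂ ⊆ K ω₁ ω₂

/-- `K` is measurable with respect to the `P`-completion of the σ-algebra of `Ω₂`. -/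
def MeasurableFam (P : Measure Ω₂) (K : Ω₁ → Ω₂ → Set X) : Prop :=
  ∀ (x : X) (ω₁ : Ω₁), NullMeasurable (fun ω₂ => infDist x (K ω₁ ω₂)) P

/-- `Φ` is `𝒟`-pullback asymptotically compact in `X`. -/
def AsympCompact (θ₁ : ℝ → Ω₁ → Ω₁) (θ₂ : ℝ → Ω₂ → Ω₂) (Φ : ℝ → Ω₁ → Ω₂ → X → X)
    (𝒟 : Set (Ω₁ → Ω₂ → Set X)) : Prop :=
  ∀ ω₁ ω₂, ∀ B ∈ 𝒟, ∀ (t : ℕ → ℝ) (x : ℕ → X),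
    Tendsto t atTop atTop →
    (∀ n, x n ∈ B (θ₁ (-(t n)) ω₁) (θ₂ (-(t n)) ω₂)) →
    ∃ (φ : ℕ → ℕ) (y : X), StrictMono φ ∧
      Tendsto (fun n => Φ (t (φ n)) (θ₁ (-(t (φ n))) ω₁) (θ₂ (-(t (φ n))) ω₂) (x (φ n)))
        atTop (𝓝 y)

/-- `A` pullback attracts every member of `𝒟` (Hausdorff semidistance goes to `0`). -/
def AttractsFam (θ₁ : ℝ → Ω₁ → Ω₁) (θ₂ : ℝ → Ω₂ → Ω₂) (Φ : ℝ → Ω₁ → Ω₂ → X → X)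
    (𝒟 : Set (Ω₁ → Ω₂ → Set X)) (A : Ω₁ → Ω₂ → Set X) : Prop :=
  ∀ ω₁ ω₂, ∀ B ∈ 𝒟, ∀ ε > (0:ℝ), ∃ T : ℝ, ∀ t ≥ T,
    pbImage θ₁ θ₂ Φ B t ω₁ ω₂ ⊆ thickening ε (A ω₁ ω₂)

/-- `A` is a `𝒟`-pullback attractor for `Φ`. -/
def IsPullbackAttractor (P : Measure Ω₂) (θ₁ : ℝ → Ω₁ → Ω₁) (θ₂ : ℝ → Ω₂ → Ω₂)
    (Φ : ℝ → Ω₁ → Ω₂ → X → X) (𝒟 : Set (Ω₁ → Ω₂ → Set X)) (A : Ω₁ → Ω₂ → Set X) : Prop :=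
  A ∈ 𝒟 ∧ MeasurableFam P A ∧
  (∀ ω₁ ω₂, IsCompact (A ω₁ ω₂)) ∧
  (∀ t : ℝ, 0 ≤ t → ∀ ω₁ ω₂, Φ t ω₁ ω₂ '' A ω₁ ω₂ = A (θ₁ t ω₁) (θ₂ t ω₂)) ∧
  AttractsFam θ₁ θ₂ Φ 𝒟 A

/-- The Ω-limit set of a family `B`. -/
def omegaLimitFam (θ₁ : ℝ → Ω₁ → Ω₁) (θ₂ : ℝ → Ω₂ → Ω₂) (Φ : ℝ → Ω₁ → Ω₂ → X → X)
    (B : Ω₁ → Ω₂ → Set X) (ω₁ : Ω₁) (ω₂ : Ω₂) : Set X :=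
  ⋂ τ ∈ Ici (0:ℝ), closure (⋃ t ∈ Ici τ, pbImage θ₁ θ₂ Φ B t ω₁ ω₂)

end RDS

section UpperSemicontinuityDet

variable {X : Type*} [NormedAddCommGroup X] [NormedSpace ℝ X] [CompleteSpace X]
  [MeasurableSpace X] [BorelSpace X]
variable {Ω₁ : Type*} {Ω₂ : Type*} [MeasurableSpace Ω₂]
variable {Λ : Type*} [MetricSpace Λ]

/-- Theorem 3.2. Upper semicontinuity of random pullback attractors
`A_λ` towards the pullback attractor `A₀` of a deterministic non-autonomous cocycle `Φ₀`
as `λ → λ₀`, under conditions (C1')–(C4'). -/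
theorem upper_semicontinuity_to_deterministic_nonautonomous
    [Nonempty Ω₁]
    (θ₁ : ℝ → Ω₁ → Ω₁) (θ₂ : ℝ → Ω₂ → Ω₂)
    (P : Measure Ω₂) [IsProbabilityMeasure P]
    (hθ₁ : IsParamDS₁ θ₁) (hθ₂ : IsParamDS₂ P θ₂)
    (Φ : Λ → ℝ → Ω₁ → Ω₂ → X → X) (l₀ : Λ)
    (𝒟 : Λ → Set (Ω₁ → Ω₂ → Set X))
    (A K : Λ → Ω₁ → Ω₂ → Set X)
    -- the random cocycles, attractors and absorbing sets, for `l ≠ l₀`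
    (hΦ : ∀ l : Λ, l ≠ l₀ → IsCocycle θ₁ θ₂ (Φ l))
    (h𝒟ne : ∀ l : Λ, l ≠ l₀ → ∀ D ∈ 𝒟 l, ∀ ω₁ ω₂, (D ω₁ ω₂).Nonempty)
    (hA𝒟 : ∀ l : Λ, l ≠ l₀ → A l ∈ 𝒟 l)
    (hAcp : ∀ l : Λ, l ≠ l₀ → ∀ ω₁ ω₂, IsCompact (A l ω₁ ω₂))
    (hAinv : ∀ l : Λ, l ≠ l₀ → ∀ t : ℝ, 0 ≤ t → ∀ ω₁ ω₂,
        Φ l t ω₁ ω₂ '' A l ω₁ ω₂ = A l (θ₁ t ω₁) (θ₂ t ω₂))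
    (hAatt : ∀ l : Λ, l ≠ l₀ → AttractsFam θ₁ θ₂ (Φ l) (𝒟 l) (A l))
    (hK𝒟 : ∀ l : Λ, l ≠ l₀ → K l ∈ 𝒟 l)
    (hKabs : ∀ l : Λ, l ≠ l₀ → AbsorbsFam θ₁ θ₂ (Φ l) (𝒟 l) (K l))
    -- the limiting deterministic non-autonomous cocycle `Φ₀` and its attractor `A₀`
    (Φ₀ : ℝ → Ω₁ → X → X)
    (𝒟₀ : Set (Ω₁ → Set X))
    (A₀ : Ω₁ → Set X)
    (hΦ₀id : ∀ ω₁, Φ₀ 0 ω₁ = id)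
    (hΦ₀coc : ∀ t τ : ℝ, 0 ≤ t → 0 ≤ τ → ∀ ω₁,
        Φ₀ (t + τ) ω₁ = (Φ₀ t (θ₁ τ ω₁)) ∘ (Φ₀ τ ω₁))
    (hΦ₀cont : ∀ t : ℝ, 0 ≤ t → ∀ ω₁, Continuous (Φ₀ t ω₁))
    (h𝒟₀ne : ∀ D ∈ 𝒟₀, ∀ ω₁, (D ω₁).Nonempty)
    (hA₀𝒟 : A₀ ∈ 𝒟₀)
    (hA₀cp : ∀ ω₁, IsCompact (A₀ ω₁))
    (hA₀inv : ∀ t : ℝ, 0 ≤ t → ∀ ω₁, Φ₀ t ω₁ '' A₀ ω₁ = A₀ (θ₁ t ω₁))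
    (hA₀att : ∀ ω₁, ∀ B ∈ 𝒟₀, ∀ ε > (0:ℝ), ∃ T : ℝ, ∀ t ≥ T,
        Φ₀ t (θ₁ (-t) ω₁) '' B (θ₁ (-t) ω₁) ⊆ thickening ε (A₀ ω₁))
    (R : Ω₁ → ℝ)
    -- (C1'): convergence of the cocycles towards `Φ₀`
    (hC1 : ∀ t : ℝ, 0 ≤ t → ∀ ω₁ ω₂, ∀ (l : ℕ → Λ) (x : ℕ → X) (x₀ : X),
        (∀ n, l n ≠ l₀) → Tendsto l atTop (𝓝 l₀) → Tendsto x atTop (𝓝 x₀) →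
        Tendsto (fun n => Φ (l n) t ω₁ ω₂ (x n)) atTop (𝓝 (Φ₀ t ω₁ x₀)))
    -- (C2'): the family of closed balls of radii `R` belongs to `𝒟₀`
    (hC2 : (fun ω₁ => {x : X | ‖x‖ ≤ R ω₁}) ∈ 𝒟₀)
    -- (C3'): `limsup_{λ→λ₀} ‖K_λ(ω₁,ω₂)‖ ≤ R(ω₁)`
    (hC3 : ∀ ω₁ ω₂, ∀ ε > (0:ℝ), ∀ᶠ l in 𝓝[≠] l₀, ∀ x ∈ K l ω₁ ω₂, ‖x‖ ≤ R ω₁ + ε)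
    -- (C4'): precompactness of the union of the attractors
    (hC4 : ∀ ω₁ ω₂, IsCompact (closure (A₀ ω₁ ∪ ⋃ (l : Λ) (_ : l ≠ l₀), A l ω₁ ω₂))) :
    ∀ ω₁ ω₂, ∀ ε > (0:ℝ), ∀ᶠ l in 𝓝[≠] l₀, A l ω₁ ω₂ ⊆ thickening ε (A₀ ω₁) := by
  intro ω₁ ω₂ ε hε
  by_contra hcon
  rw [Filter.not_eventually] at hcon
  -- group identities
  have hθ1id : ∀ s : ℝ, ∀ ω : Ω₁, θ₁ s (θ₁ (-s) ω) = ω := by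
    intro s ω
    have h0 : θ₁ (-s + s) ω = θ₁ s (θ₁ (-s) ω) := by rw [hθ₁.2 (-s) s]; rfl
    rw [neg_add_cancel, hθ₁.1] at h0
    exact h0.symm
  have hθ2id : ∀ s : ℝ, ∀ ω : Ω₂, θ₂ s (θ₂ (-s) ω) = ω := by
    intro s ω
    have h0 : θ₂ (-s + s) ω = θ₂ s (θ₂ (-s) ω) := by rw [hθ₂.2.2.1 (-s) s]; rfl
    rw [neg_add_cancel, hθ₂.2.1] at h0
    exact h0.symm
  -- attraction time for the deterministic attractor over the ball family
  obtain ⟨T₀, hT₀⟩ := hA₀att ω₁ _ hC2 (ε/2) (by linarith)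
  set t : ℝ := max T₀ 0 with ht
  have ht0 : 0 ≤ t := le_max_right _ _
  have htT : t ≥ T₀ := le_max_left _ _
  set ω₁' : Ω₁ := θ₁ (-t) ω₁ with hω₁'
  set ω₂' : Ω₂ := θ₂ (-t) ω₂ with hω₂'
  -- attractors are contained in absorbing sets
  have hAK : ∀ l : Λ, l ≠ l₀ → A l ω₁' ω₂' ⊆ K l ω₁' ω₂' := by
    intro l hl
    obtain ⟨Tl, hTlpos, hTl⟩ := hKabs l hl ω₁' ω₂' (A l) (hA𝒟 l hl)
    have h := hTl Tl le_rfl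
    rw [pbImage, hAinv l hl Tl hTlpos.le, hθ1id, hθ2id] at h
    exact h
  -- pick a bad sequence
  have hpick : ∀ n : ℕ, ∃ l : Λ, l ≠ l₀ ∧ dist l l₀ < 1/(n+1) ∧
      (∀ x ∈ K l ω₁' ω₂', ‖x‖ ≤ R ω₁' + 1/(n+1)) ∧
      ¬ (A l ω₁ ω₂ ⊆ thickening ε (A₀ ω₁)) := by
    intro n
    have hnpos : (0:ℝ) < 1/(n+1) := by positivity
    have h1 : ∀ᶠ l in 𝓝[≠] l₀, l ≠ l₀ := by
      filter_upwards [self_mem_nhdsWithin] with l hl using hl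
    have h2 : ∀ᶠ l in 𝓝[≠] l₀, dist l l₀ < 1/(n+1) := by
      apply eventually_nhdsWithin_of_eventually_nhds
      filter_upwards [Metric.ball_mem_nhds l₀ hnpos] with l hl using hl
    obtain ⟨l, hbad, hne, hdist, hK⟩ :=
      (hcon.and_eventually (h1.and (h2.and (hC3 ω₁' ω₂' _ hnpos)))).exists
    exact ⟨l, hne, hdist, hK, hbad⟩
  choose l hlne hldist hlK hlsub using hpick
  -- pick points outside the thickening
  choose x hxA hxT using fun n => Set.not_subset.mp (hlsub n)
  -- pull back to time -t
  have hAinv' : ∀ n, Φ (l n) t ω₁' ω₂' '' A (l n) ω₁' ω₂' = A (l n) ω₁ ω₂ := by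
    intro n
    rw [hAinv (l n) (hlne n) t ht0, hω₁', hω₂', hθ1id, hθ2id]
  have hxy : ∀ n, ∃ y ∈ A (l n) ω₁' ω₂', Φ (l n) t ω₁' ω₂' y = x n := by
    intro n
    have : x n ∈ Φ (l n) t ω₁' ω₂' '' A (l n) ω₁' ω₂' := (hAinv' n).symm ▸ hxA n
    exact this
  choose y hyA hyx using hxy
  -- compactness: extract a convergent subsequence
  have hyC : ∀ n, y n ∈ closure (A₀ ω₁' ∪ ⋃ (l' : Λ) (_ : l' ≠ l₀), A l' ω₁' ω₂') := by
    intro n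
    apply subset_closure
    exact Or.inr (Set.mem_iUnion.2 ⟨l n, Set.mem_iUnion.2 ⟨hlne n, hyA n⟩⟩)
  obtain ⟨y₀, _, φ, hφ, hyconv⟩ := (hC4 ω₁' ω₂').tendsto_subseq hyC
  -- the limit lies in the ball of radius R ω₁'
  have hfrac : Tendsto (fun k : ℕ => 1/((φ k : ℝ)+1)) atTop (𝓝 0) := by
    have := (tendsto_one_div_add_atTop_nhds_zero_nat (𝕜 := ℝ)).comp hφ.tendsto_atTop
    simpa [Function.comp_def] using this
  have hy₀norm : ‖y₀‖ ≤ R ω₁' := by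
    have hnt : Tendsto (fun k => ‖y (φ k)‖) atTop (𝓝 ‖y₀‖) :=
      (continuous_norm.tendsto _).comp hyconv
    refine le_of_forall_pos_le_add fun δ hδ => ?_
    refine le_of_tendsto hnt ?_
    filter_upwards [hfrac.eventually (gt_mem_nhds hδ)] with k hk
    have := hlK (φ k) _ (hAK (l (φ k)) (hlne _) (hyA (φ k)))
    push_cast at this ⊢
    linarith
  -- convergence of parameters
  have hlconv : Tendsto (fun k => l (φ k)) atTop (𝓝 l₀) := by
    rw [tendsto_iff_dist_tendsto_zero]
    refine squeeze_zero (fun k => dist_nonneg) (fun k => (hldist (φ k)).le) ?_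
    exact_mod_cast hfrac
  -- convergence of trajectories via (C1')
  have hxconv : Tendsto (fun k => x (φ k)) atTop (𝓝 (Φ₀ t ω₁' y₀)) := by
    have := hC1 t ht0 ω₁' ω₂' (fun k => l (φ k)) (fun k => y (φ k)) y₀
      (fun k => hlne _) hlconv hyconv
    simpa [hyx] using this
  -- the limit is close to A₀
  have hA₀ne : (A₀ ω₁).Nonempty := h𝒟₀ne A₀ hA₀𝒟 ω₁
  have hmem : Φ₀ t ω₁' y₀ ∈ thickening (ε/2) (A₀ ω₁) := by
    apply hT₀ t htT
    exact Set.mem_image_of_mem _ hy₀norm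
  have hlt : infDist (Φ₀ t ω₁' y₀) (A₀ ω₁) < ε/2 :=
    (mem_thickening_iff_infDist_lt hA₀ne).1 hmem
  -- but the points stay ε away from A₀: contradiction
  have hge : ε ≤ infDist (Φ₀ t ω₁' y₀) (A₀ ω₁) := by
    refine ge_of_tendsto ((continuous_infDist_pt (A₀ ω₁)).tendsto _ |>.comp hxconv) ?_
    filter_upwards with k
    by_contra h
    push_neg at h
    exact hxT (φ k) ((mem_thickening_iff_infDist_lt hA₀ne).2 h)
  linarith

end UpperSemicontinuityDet
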